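/- Let n and α be positive integers with α < n < 2α, and let G be a connected graph of order n and independence number α having a vertex x_0 such that G − x_0 is isomorphic to G(n−1,α). Then G is isomorphic to a graph that arises from F(n,α) by adding edges (possibly none) incident with the special cutvertex x_0 of F(n,α). -/

import Mathlib

open Finset

/-- A finset of vertices is independent in `G`: pairwise non-adjacent. -/
def IsIndepFinset {V : Type*} (G : SimpleGraph V) (s : Finset V) : Prop :=
  ∀ ⦃u⦄, u ∈ s → ∀ ⦃v⦄, v ∈ s → u ≠ v → ¬ G.Adj u v

/-- The independence number of a finite graph. -/
noncomputable def indepNumber {V : Type*} [Fintype V] (G : SimpleGraph V) : ℕ :=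
  sSup {k | ∃ s : Finset V, IsIndepFinset G s ∧ s.card = k}

/-- The number `♯α(G)` of maximum independent sets of `G`. -/
noncomputable def numMaxIndep {V : Type*} [Fintype V] (G : SimpleGraph V) : ℕ :=
  Set.ncard {s : Finset V | IsIndepFinset G s ∧ s.card = indepNumber G}

/-- The number `♯α(G,u)` of maximum independent sets of `G` containing `u`. -/
noncomputable def numMaxIndepOn {V : Type*} [Fintype V] (G : SimpleGraph V) (u : V) : ℕ :=
  Set.ncard {s : Finset V | IsIndepFinset G s ∧ s.card = indepNumber G ∧ u ∈ s}

/-- `g(n,α) = ⌊n/α⌋^(α − n mod α) ⌈n/α⌉^(n mod α)`. -/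
def gFun (n a : ℕ) : ℕ := (n / a) ^ (a - n % a) * ((n + a - 1) / a) ^ (n % a)

/-- `t(n,α) = ∏_{i=1}^{α−1} (|C_i| − 1)`, where `|C_i| = ⌊n/α⌋ + 1` for `i < n mod α`
and `|C_i| = ⌊n/α⌋` otherwise. -/
def tFun (n a : ℕ) : ℕ := ∏ i ∈ Finset.Ico 1 a, (n / a + (if i < n % a then 1 else 0) - 1)

/-- `f(n,α) = g(n−1,α) + t(n,α)`. -/
def fFun (n a : ℕ) : ℕ := gFun (n - 1) a + tFun n a

/-- `G(n,α)`: complement of the Turán graph, i.e. the disjoint union of `α` cliques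
(the residue classes mod `α`), each of order `⌈n/α⌉` or `⌊n/α⌋`. -/
def Ggraph (n a : ℕ) : SimpleGraph (Fin n) where
  Adj v w := v ≠ w ∧ v.val % a = w.val % a
  symm := by constructor; intro v w h; exact ⟨h.1.symm, h.2.symm⟩
  loopless := by constructor; intro v h; exact h.1 rfl

/-- `F(n,α)`: `G(n,α)` plus the edges `x₀x₁, …, x₀x_{α−1}`, where `x_i` is the vertex `i`
of the clique `C_i` (the residue class of `i` mod `α`); `x₀ = 0` is the special cutvertex,
lying in the clique `C₀` of order `⌈n/α⌉`. -/
def Fgraph (n a : ℕ) : SimpleGraph (Fin n) where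
  Adj v w := v ≠ w ∧
    (v.val % a = w.val % a ∨ (v.val = 0 ∧ w.val < a) ∨ (w.val = 0 ∧ v.val < a))
  symm := by constructor; intro v w h; exact ⟨h.1.symm, by tauto⟩
  loopless := by constructor; intro v h; exact h.1 rfl



lemma mod_small' {a x : ℕ} (h : x < a) : x % a = x := Nat.mod_eq_of_lt h

lemma mod_mid' {a x : ℕ} (h1 : a ≤ x) (h2 : x < 2*a) : x % a = x - a := by
  rw [Nat.mod_eq_sub_mod h1, Nat.mod_eq_of_lt (by omega)]

open scoped Classical in
/-- index relabeling: vertex `j` of `G(m,a)` is sent to position `outF a m Q j` in `F(n,a)`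
(where `n = m+1`); within a pair-class `{r, r+a}` the two vertices are swapped when the
lower one is not a neighbour of `x₀` (encoded by `¬ Q r`). -/
noncomputable def outF (a m : ℕ) (Q : ℕ → Prop) (j : ℕ) : ℕ :=
  if j < a then (if j + a < m ∧ ¬ Q j then j + a + 1 else j + 1)
  else (if Q (j - a) then j + 1 else j - a + 1)

lemma outF_pos (a m : ℕ) (Q : ℕ → Prop) (j : ℕ) : 1 ≤ outF a m Q j := by
  unfold outF; split_ifs <;> omega

lemma outF_le (a m : ℕ) (Q : ℕ → Prop) {j : ℕ} (hj : j < m) : outF a m Q j ≤ m := by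
  unfold outF; split_ifs <;> omega

lemma outF_mem (a m : ℕ) (Q : ℕ → Prop) {j : ℕ} (hm : m < 2*a) (hj : j < m) :
    outF a m Q j = j % a + 1 ∨ (outF a m Q j = j % a + a + 1 ∧ j % a + a < m) := by
  by_cases h : j < a
  · rw [mod_small' h]
    unfold outF
    rw [if_pos h]
    split_ifs with h2
    · right; omega
    · left; rfl
  · rw [mod_mid' (by omega) (by omega)]
    unfold outF
    rw [if_neg h]
    split_ifs with h2
    · right; omega
    · left; rfl

lemma outF_mod (a m : ℕ) (Q : ℕ → Prop) {j : ℕ} (hm : m < 2*a) (hj : j < m) :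
    outF a m Q j % a = (j % a + 1) % a := by
  rcases outF_mem a m Q hm hj with h | ⟨h, h2⟩
  · rw [h]
  · rw [h]
    have : j % a + a + 1 = (j % a + 1) + 1 * a := by ring
    rw [this, Nat.add_mul_mod_self_right]

lemma outF_inj (a m : ℕ) (Q : ℕ → Prop) {j k : ℕ} (hm : m < 2*a) (hj : j < m) (hk : k < m)
    (h : outF a m Q j = outF a m Q k) : j = k := by
  unfold outF at h
  split_ifs at h with h1 h2 h3 h4 h5 h6 h7 h8
  all_goals try omega
  · exfalso
    exact h2.2 (by have hh : j = k - a := by omega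
                   rw [hh]; exact h5)
  · exfalso
    have hQj : Q j := by
      by_contra hq; exact h2 ⟨by omega, hq⟩
    apply h8
    have hh : k - a = j := by omega
    rw [hh]; exact hQj
  · exfalso
    rename_i hQj hka hk2
    exact hk2.2 (by have hh : k = j - a := by omega
                    rw [hh]; exact hQj)
  · exfalso
    rename_i hQj hka hk2
    have hQk : Q k := by
      by_contra hq; exact hk2 ⟨by omega, hq⟩
    apply hQj
    have hh : j - a = k := by omega
    rw [hh]; exact hQk

/-- Let `α < n < 2α`, and let `G` be a connected graph of order `n` and independence number
`α` with a vertex `x₀` such that `G − x₀ ≅ G(n−1,α)`. Then `G` is isomorphic to a graph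
that arises from `F(n,α)` by adding edges (possibly none), all incident with the special
cutvertex `x₀ = 0` of `F(n,α)`. -/
theorem iso_Fgraph_plus_edges_at_special_cutvertex {V : Type*} [Fintype V]
    (G : SimpleGraph V) (n a : ℕ) (ha0 : 0 < a) (han : a < n) (hn2a : n < 2 * a)
    (hconn : G.Connected) (hcard : Fintype.card V = n) (hα : indepNumber G = a) (x₀ : V)
    (hiso : Nonempty ((G.induce ({x₀}ᶜ : Set V)) ≃g Ggraph (n - 1) a)) :
    ∃ G' : SimpleGraph (Fin n), Fgraph n a ≤ G' ∧
      (∀ u v : Fin n, G'.Adj u v → ¬ (Fgraph n a).Adj u v → u.val = 0 ∨ v.val = 0) ∧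
      Nonempty (G ≃g G') := by
  classical
  obtain ⟨ψ⟩ := hiso
  have hmem : ∀ {v : V}, v ≠ x₀ → v ∈ ({x₀}ᶜ : Set V) := fun h => by simp [h]
  have adj_iff : ∀ (p q : V) (hp : p ≠ x₀) (hq : q ≠ x₀),
      G.Adj p q ↔ (ψ ⟨p, hmem hp⟩ ≠ ψ ⟨q, hmem hq⟩ ∧
        (ψ ⟨p, hmem hp⟩ : Fin (n-1)).val % a = (ψ ⟨q, hmem hq⟩ : Fin (n-1)).val % a) := by
    intro p q hp hq
    have h1 : (Ggraph (n-1) a).Adj (ψ ⟨p, hmem hp⟩) (ψ ⟨q, hmem hq⟩) ↔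
        (G.induce ({x₀}ᶜ : Set V)).Adj ⟨p, hmem hp⟩ ⟨q, hmem hq⟩ := ψ.map_rel_iff
    have h2 : (G.induce ({x₀}ᶜ : Set V)).Adj ⟨p, hmem hp⟩ ⟨q, hmem hq⟩ ↔ G.Adj p q := by
      simp [SimpleGraph.comap_adj]
    rw [← h2, ← h1]
    exact Iff.rfl
  -- every residue class of `G - x₀` contains a neighbour of `x₀`
  have reach : ∀ (v w : V) (p : G.Walk v w), w = x₀ → ∀ hv : v ≠ x₀,
      ∃ j : Fin (n-1), j.val % a = (ψ ⟨v, hmem hv⟩ : Fin (n-1)).val % a ∧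
        G.Adj x₀ ((ψ.symm j : ({x₀}ᶜ : Set V)) : V) := by
    intro v w p
    induction p with
    | nil => intro hw hv; exact absurd hw hv
    | @cons v u w hadj q ih =>
      intro hw hv
      by_cases hu : u = x₀
      · refine ⟨ψ ⟨v, hmem hv⟩, rfl, ?_⟩
        have h1 : ψ.symm (ψ ⟨v, hmem hv⟩) = ⟨v, hmem hv⟩ := ψ.symm_apply_apply _
        rw [h1]
        have h2 : G.Adj v x₀ := by rw [hu] at hadj; exact hadj
        exact h2.symm
      · obtain ⟨j, hj1, hj2⟩ := ih hw hu
        refine ⟨j, ?_, hj2⟩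
        rw [hj1]
        exact ((adj_iff u v hu hv).mp hadj.symm).2
  have classnbr : ∀ r : ℕ, r < a → ∃ j : Fin (n-1), j.val % a = r ∧
      G.Adj x₀ ((ψ.symm j : ({x₀}ᶜ : Set V)) : V) := by
    intro r hr
    have hrm : r < n - 1 := by omega
    set w : ({x₀}ᶜ : Set V) := ψ.symm ⟨r, hrm⟩ with hwdef
    have hw : (w : V) ≠ x₀ := fun h => w.2 h
    obtain ⟨p⟩ := hconn.preconnected (w : V) x₀
    obtain ⟨j, hj1, hj2⟩ := reach (w : V) x₀ p rfl hw
    refine ⟨j, ?_, hj2⟩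
    have hcast : (⟨(w : V), hmem hw⟩ : ({x₀}ᶜ : Set V)) = w := Subtype.ext rfl
    rw [hj1, hcast, hwdef, ψ.apply_symm_apply]
    exact mod_small' hr
  set Q : ℕ → Prop := fun r => ∃ hr : r < n - 1,
      G.Adj x₀ ((ψ.symm ⟨r, hr⟩ : ({x₀}ᶜ : Set V)) : V) with hQdef
  have key : ∀ r : ℕ, r < a → ∃ (w : V) (hw : w ≠ x₀), G.Adj x₀ w ∧
      outF a (n-1) Q (ψ ⟨w, hmem hw⟩ : Fin (n-1)).val = r + 1 := by
    intro r hr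
    obtain ⟨j, hj1, hj2⟩ := classnbr r hr
    by_cases hQr : Q r
    · obtain ⟨hrm, hadj⟩ := hQr
      have hw : ((ψ.symm ⟨r, hrm⟩ : ({x₀}ᶜ : Set V)) : V) ≠ x₀ :=
        fun h => (ψ.symm ⟨r, hrm⟩ : ({x₀}ᶜ : Set V)).2 h
      refine ⟨_, hw, hadj, ?_⟩
      have hcast : (⟨((ψ.symm ⟨r, hrm⟩ : ({x₀}ᶜ : Set V)) : V), hmem hw⟩ : ({x₀}ᶜ : Set V))
          = ψ.symm ⟨r, hrm⟩ := Subtype.ext rfl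
      rw [hcast, ψ.apply_symm_apply]
      show outF a (n-1) Q r = r + 1
      unfold outF
      rw [if_pos hr, if_neg (by rintro ⟨-, hc⟩; exact hc ⟨hrm, hadj⟩)]
    · have hjr : j.val = r + a := by
        have hj2a : j.val < 2*a := lt_of_lt_of_le j.isLt (by omega)
        by_cases hja : j.val < a
        · exfalso
          rw [mod_small' hja] at hj1
          apply hQr
          refine ⟨hj1 ▸ j.isLt, ?_⟩
          have : (⟨r, hj1 ▸ j.isLt⟩ : Fin (n-1)) = j := Fin.ext hj1.symm
          rw [this]
          exact hj2
        · rw [mod_mid' (le_of_not_gt hja) hj2a] at hj1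
          omega
      have hw : ((ψ.symm j : ({x₀}ᶜ : Set V)) : V) ≠ x₀ :=
        fun h => (ψ.symm j : ({x₀}ᶜ : Set V)).2 h
      refine ⟨_, hw, hj2, ?_⟩
      have hcast : (⟨((ψ.symm j : ({x₀}ᶜ : Set V)) : V), hmem hw⟩ : ({x₀}ᶜ : Set V))
          = ψ.symm j := Subtype.ext rfl
      rw [hcast, ψ.apply_symm_apply]
      unfold outF
      rw [if_neg (by omega), if_neg (by rw [show j.val - a = r from by omega]; exact hQr)]
      omega
  -- the relabeling map
  have hn0 : 0 < n := by omega
  set f : V → Fin n := fun v =>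
    if h : v = x₀ then ⟨0, hn0⟩
    else ⟨outF a (n-1) Q (ψ ⟨v, hmem h⟩ : Fin (n-1)).val, by
      have := outF_le a (n-1) Q (ψ ⟨v, hmem h⟩ : Fin (n-1)).isLt
      omega⟩ with hfdef
  have f0 : f x₀ = ⟨0, hn0⟩ := by rw [hfdef]; exact dif_pos rfl
  have fval : ∀ (v : V) (hv : v ≠ x₀),
      (f v).val = outF a (n-1) Q (ψ ⟨v, hmem hv⟩ : Fin (n-1)).val := by
    intro v hv
    rw [hfdef]
    simp only [dif_neg hv]
  have finj : Function.Injective f := by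
    intro v w hvw
    by_cases hv : v = x₀ <;> by_cases hw : w = x₀
    · rw [hv, hw]
    · exfalso
      have h1 : (f v).val = 0 := by rw [hv, f0]
      have h2 := fval w hw
      have := outF_pos a (n-1) Q (ψ ⟨w, hmem hw⟩ : Fin (n-1)).val
      omega
    · exfalso
      have h1 : (f w).val = 0 := by rw [hw, f0]
      have h2 := fval v hv
      have := outF_pos a (n-1) Q (ψ ⟨v, hmem hv⟩ : Fin (n-1)).val
      omega
    · have h1 : outF a (n-1) Q (ψ ⟨v, hmem hv⟩ : Fin (n-1)).val
          = outF a (n-1) Q (ψ ⟨w, hmem hw⟩ : Fin (n-1)).val := by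
        rw [← fval v hv, ← fval w hw, hvw]
      have hm2 : n - 1 < 2 * a := by omega
      have h2 := outF_inj a (n-1) Q hm2 (ψ ⟨v, hmem hv⟩ : Fin (n-1)).isLt
        (ψ ⟨w, hmem hw⟩ : Fin (n-1)).isLt h1
      have h3 : ψ ⟨v, hmem hv⟩ = ψ ⟨w, hmem hw⟩ := Fin.ext h2
      have h4 : (⟨v, hmem hv⟩ : ({x₀}ᶜ : Set V)) = ⟨w, hmem hw⟩ := ψ.injective h3
      exact congrArg Subtype.val h4
  have fbij : Function.Bijective f :=
    (Fintype.bijective_iff_injective_and_card f).mpr ⟨finj, by rw [hcard, Fintype.card_fin]⟩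
  set e : V ≃ Fin n := Equiv.ofBijective f fbij with hedef
  have he : ∀ v, e v = f v := fun v => rfl
  have esymm0 : e.symm ⟨0, hn0⟩ = x₀ := by
    rw [Equiv.symm_apply_eq, he, f0]
  have esymmne : ∀ (u : Fin n), u.val ≠ 0 → e.symm u ≠ x₀ := by
    intro u hu h
    apply hu
    have : u = e x₀ := by rw [← h, Equiv.apply_symm_apply]
    rw [this, he, f0]
  have esymmval : ∀ (u : Fin n) (hu : e.symm u ≠ x₀),
      u.val = outF a (n-1) Q (ψ ⟨e.symm u, hmem hu⟩ : Fin (n-1)).val := by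
    intro u hu
    conv_lhs => rw [← Equiv.apply_symm_apply e u]
    rw [he]
    exact fval _ hu
  -- star edges from x₀
  have star : ∀ (s : Fin n), 1 ≤ s.val → s.val ≤ a → G.Adj x₀ (e.symm s) := by
    intro s hs1 hs2
    obtain ⟨w, hw, hadj, hout⟩ := key (s.val - 1) (by omega)
    have hws : e w = s := by
      apply Fin.ext
      rw [he, fval w hw, hout]
      omega
    rw [← hws, Equiv.symm_apply_apply]
    exact hadj
  -- pair edges
  have hm2 : n - 1 < 2 * a := by omega
  have pairadj : ∀ (u v : Fin n), u.val ≠ 0 → v.val ≠ 0 → u ≠ v →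
      u.val % a = v.val % a → G.Adj (e.symm u) (e.symm v) := by
    intro u v hu0 hv0 huv hmod
    have hp := esymmne u hu0
    have hq := esymmne v hv0
    have hup := esymmval u hp
    have hvq := esymmval v hq
    set jp := (ψ ⟨e.symm u, hmem hp⟩ : Fin (n-1)) with hjp
    set jq := (ψ ⟨e.symm v, hmem hq⟩ : Fin (n-1)) with hjq
    have h1 : outF a (n-1) Q jp.val % a = (jp.val % a + 1) % a :=
      outF_mod a (n-1) Q hm2 jp.isLt
    have h2 : outF a (n-1) Q jq.val % a = (jq.val % a + 1) % a :=
      outF_mod a (n-1) Q hm2 jq.isLt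
    have hmm : (jp.val % a + 1) % a = (jq.val % a + 1) % a := by
      rw [← h1, ← h2, ← hup, ← hvq]
      exact hmod
    have hxa : jp.val % a < a := Nat.mod_lt _ ha0
    have hya : jq.val % a < a := Nat.mod_lt _ ha0
    have hclass : jp.val % a = jq.val % a := by
      by_cases hx : jp.val % a + 1 = a <;> by_cases hy : jq.val % a + 1 = a
      · omega
      · exfalso
        have e2 : (jq.val % a + 1) % a = jq.val % a + 1 := mod_small' (by omega)
        rw [hx, Nat.mod_self, e2] at hmm
        omega
      · exfalso
        have e1 : (jp.val % a + 1) % a = jp.val % a + 1 := mod_small' (by omega)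
        rw [hy, Nat.mod_self, e1] at hmm
        omega
      · have e1 : (jp.val % a + 1) % a = jp.val % a + 1 := mod_small' (by omega)
        have e2 : (jq.val % a + 1) % a = jq.val % a + 1 := mod_small' (by omega)
        rw [e1, e2] at hmm
        omega
    have hne : jp ≠ jq := by
      intro h
      apply huv
      have h4 : (⟨e.symm u, hmem hp⟩ : ({x₀}ᶜ : Set V)) = ⟨e.symm v, hmem hq⟩ :=
        ψ.injective (by rw [← hjp, ← hjq, h])
      have h5 : e.symm u = e.symm v := congrArg Subtype.val h4
      rw [← Equiv.apply_symm_apply e u, ← Equiv.apply_symm_apply e v, h5]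
    exact (adj_iff _ _ hp hq).mpr ⟨hne, hclass⟩
  refine ⟨⟨fun u v => G.Adj (e.symm u) (e.symm v), ⟨fun u v h => G.adj_symm h⟩,
      ⟨fun u h => G.irrefl h⟩⟩, ?_, ?_, ⟨⟨e, ?_⟩⟩⟩
  · -- Fgraph n a ≤ G'
    intro u v huv
    obtain ⟨hne, hcase⟩ := huv
    show G.Adj (e.symm u) (e.symm v)
    by_cases hu0 : u.val = 0
    · have hv0 : v.val ≠ 0 := fun h => hne (Fin.ext (by omega))
      have hva : v.val ≤ a := by
        rcases hcase with hc | ⟨_, hva⟩ | ⟨hv, _⟩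
        · rw [hu0, Nat.zero_mod] at hc
          by_cases h : v.val < a
          · omega
          · have h2 := mod_mid' (le_of_not_gt h) (by omega : v.val < 2*a)
            rw [h2] at hc
            omega
        · omega
        · omega
      have hu : u = ⟨0, hn0⟩ := Fin.ext hu0
      rw [hu, esymm0]
      exact star v (by omega) hva
    by_cases hv0 : v.val = 0
    · have hua : u.val ≤ a := by
        rcases hcase with hc | ⟨hu, _⟩ | ⟨_, hua⟩
        · rw [hv0, Nat.zero_mod] at hc
          by_cases h : u.val < a
          · omega
          · have h2 := mod_mid' (le_of_not_gt h) (by omega : u.val < 2*a)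
            rw [h2] at hc
            omega
        · omega
        · omega
      have hv : v = ⟨0, hn0⟩ := Fin.ext hv0
      rw [hv, esymm0]
      exact (star u (by omega) hua).symm
    · rcases hcase with hc | ⟨h, _⟩ | ⟨h, _⟩
      · exact pairadj u v hu0 hv0 hne hc
      · exact absurd h hu0
      · exact absurd h hv0
  · -- extra edges only at the special cutvertex
    intro u v hadj hnF
    by_contra hcon
    push_neg at hcon
    obtain ⟨hu0, hv0⟩ := hcon
    have hp := esymmne u hu0
    have hq := esymmne v hv0
    have hG : G.Adj (e.symm u) (e.symm v) := hadj
    obtain ⟨hne', hcl⟩ := (adj_iff _ _ hp hq).mp hG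
    apply hnF
    refine ⟨?_, Or.inl ?_⟩
    · intro h
      rw [h] at hG
      exact G.irrefl hG
    · rw [esymmval u hp, esymmval v hq,
        outF_mod a (n-1) Q hm2 (ψ ⟨e.symm u, hmem hp⟩ : Fin (n-1)).isLt,
        outF_mod a (n-1) Q hm2 (ψ ⟨e.symm v, hmem hq⟩ : Fin (n-1)).isLt, hcl]
  · -- the isomorphism
    intro u v
    show G.Adj (e.symm (e u)) (e.symm (e v)) ↔ G.Adj u v
    rw [Equiv.symm_apply_apply, Equiv.symm_apply_apply]
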